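/- For ψ analytic nonvanishing on an open set Ω with ℏ²ψ''=Uψ, the third-order operator Û defined by Û·f = (1/2)·(2ψ'/ψ + ∂)·∂·(2ψ'/ψ − ∂)·f equals −(1/2)f''' + (2/ℏ²)U·f' + (1/ℏ²)U'·f for every analytic f on Ω; in particular Û depends only on U and not on the choice of solution ψ. -/

import Mathlib

/-- Gelfand–Dikii operator: for `ψ` analytic nonvanishing with `ℏ²ψ'' = Uψ` on open `Ω`,
and any analytic `f` on `Ω`,
`½(2ψ'/ψ + ∂)∂(2ψ'/ψ − ∂)f = −½f''' + (2/ℏ²)Uf' + (1/ℏ²)U'f`,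
so the operator depends only on `U`. -/
theorem stmt8 (ℏ : ℂ) (hℏ : ℏ ≠ 0) (Ω : Set ℂ) (hΩ : IsOpen Ω)
    (U ψ f : ℂ → ℂ)
    (hU : AnalyticOnNhd ℂ U Ω)
    (hψ : AnalyticOnNhd ℂ ψ Ω)
    (hψ0 : ∀ x ∈ Ω, ψ x ≠ 0)
    (heq : ∀ x ∈ Ω, ℏ ^ 2 * deriv (deriv ψ) x = U x * ψ x)
    (hf : AnalyticOnNhd ℂ f Ω) :
    ∀ x ∈ Ω,
      (1 / 2) *
        (2 * (deriv ψ x / ψ x) *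
            deriv (fun t => 2 * (deriv ψ t / ψ t) * f t - deriv f t) x
          + deriv (deriv (fun t => 2 * (deriv ψ t / ψ t) * f t - deriv f t)) x)
      = -(1 / 2) * deriv (deriv (deriv f)) x
          + (2 / ℏ ^ 2) * U x * deriv f x
          + (1 / ℏ ^ 2) * deriv U x * f x := by
  -- derivative of the logarithmic derivative ψ'/ψ
  have key : ∀ y ∈ Ω, HasDerivAt (fun t => deriv ψ t / ψ t)
      (U y / ℏ ^ 2 - (deriv ψ y / ψ y) ^ 2) y := by
    intro y hy
    have hψD : HasDerivAt ψ (deriv ψ y) y := (hψ y hy).differentiableAt.hasDerivAt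
    have hψ'D : HasDerivAt (deriv ψ) (deriv (deriv ψ) y) y :=
      ((hψ.deriv) y hy).differentiableAt.hasDerivAt
    have H := hψ'D.div hψD (hψ0 y hy)
    refine H.congr_deriv ?_
    have h2 : deriv (deriv ψ) y = U y * ψ y / ℏ ^ 2 := by
      have := heq y hy
      field_simp
      linear_combination this
    rw [h2]
    field_simp [hψ0 y hy]
  intro x hx
  have hmem : Ω ∈ nhds x := hΩ.mem_nhds hx
  -- first derivative of the inner function
  have hd : ∀ y ∈ Ω, deriv (fun t => 2 * (deriv ψ t / ψ t) * f t - deriv f t) y =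
      2 * (U y / ℏ ^ 2 - (deriv ψ y / ψ y) ^ 2) * f y
        + 2 * (deriv ψ y / ψ y) * deriv f y - deriv (deriv f) y := by
    intro y hy
    have hfD : HasDerivAt f (deriv f y) y := (hf y hy).differentiableAt.hasDerivAt
    have hf'D : HasDerivAt (deriv f) (deriv (deriv f) y) y :=
      ((hf.deriv) y hy).differentiableAt.hasDerivAt
    have H := (((key y hy).const_mul 2).mul hfD).sub hf'D
    exact H.deriv
  have hev : deriv (fun t => 2 * (deriv ψ t / ψ t) * f t - deriv f t) =ᶠ[nhds x]
      (fun t => 2 * (U t / ℏ ^ 2 - (deriv ψ t / ψ t) ^ 2) * f t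
        + 2 * (deriv ψ t / ψ t) * deriv f t - deriv (deriv f) t) :=
    Filter.eventuallyEq_of_mem hmem hd
  have hUD : HasDerivAt U (deriv U x) x := (hU x hx).differentiableAt.hasDerivAt
  have hfD : HasDerivAt f (deriv f x) x := (hf x hx).differentiableAt.hasDerivAt
  have hf'D : HasDerivAt (deriv f) (deriv (deriv f) x) x :=
    ((hf.deriv) x hx).differentiableAt.hasDerivAt
  have hf''D : HasDerivAt (deriv (deriv f)) (deriv (deriv (deriv f)) x) x :=
    ((hf.deriv.deriv) x hx).differentiableAt.hasDerivAt
  have big := (((((hUD.div_const (ℏ ^ 2)).sub ((key x hx).pow 2)).const_mul 2).mul hfD).add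
      (((key x hx).const_mul 2).mul hf'D)).sub hf''D
  have e2 := hev.deriv_eq
  rw [hd x hx, e2, (show HasDerivAt (fun t => 2 * (U t / ℏ ^ 2 - (deriv ψ t / ψ t) ^ 2) * f t
      + 2 * (deriv ψ t / ψ t) * deriv f t - deriv (deriv f) t) _ x from big).deriv]
  push_cast
  norm_num
  generalize deriv ψ x / ψ x = a
  field_simp
  ring
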